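/- Let T̃ : ℝ² → ℝ be continuously differentiable with compact support, let φ : ℝ² → ℝ be twice continuously differentiable with bounded gradient ∇φ, and fix k, l ∈ ℝ². Let ψ_l(x) = 2 cos(l·x), and define A^q(x) = (∂T̃/∂x_q)(x − ∇φ(x)) for q = 1, 2. Then the derivative at ε = 0 of ε ↦ (2π)⁻¹ ∫_{ℝ²} e^{−i k·x} T̃(x − ∇φ(x) − ε ∇ψ_l(x)) dx equals Σ_{q=1,2} i l_q ( Â^q(k+l) − Â^q(k−l) ), where Â^q denotes the Fourier transform of A^q and l_q denotes the q-th component of l. -/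

import Mathlib

open MeasureTheory
open scoped RealInnerProductSpace

noncomputable section

/-- `ℝ²` as a Euclidean (inner product) space. -/
abbrev E2 := EuclideanSpace ℝ (Fin 2)

/-- The Fourier transform with the paper's normalization:
`f̂(l) = (2π)⁻¹ ∫ e^{-i x·l} f(x) dx`. -/
noncomputable def ft (f : E2 → ℂ) (l : E2) : ℂ :=
  (2 * Real.pi)⁻¹ • ∫ x : E2, Complex.exp (-(Complex.I * (⟪x, l⟫ : ℂ))) * f x

/-- Fourier transform of a real-valued function. -/
noncomputable def ftR (f : E2 → ℝ) (l : E2) : ℂ := ft (fun x => (f x : ℂ)) l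

/-- The `q`-th partial derivative of `f : ℝ² → ℝ`. -/
noncomputable def pderiv2 (q : Fin 2) (f : E2 → ℝ) (x : E2) : ℝ :=
  fderiv ℝ f x (EuclideanSpace.single q 1)

/-- The anti-lensed gradient field `A^q(x) = (∂T/∂x_q)(x - ∇φ(x))`. -/
noncomputable def Aq (T φ : E2 → ℝ) (q : Fin 2) (x : E2) : ℝ :=
  pderiv2 q T (x - gradient φ x)

/-- The cosine mode `ψ_l(x) = 2 cos(l·x)`. -/
noncomputable def psil (l : E2) (x : E2) : ℝ := 2 * Real.cos ⟪l, x⟫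

set_option linter.unusedSectionVars false

section helpers

lemma grad_psil (l x : E2) :
    HasGradientAt (psil l) ((-(2 * Real.sin ⟪l, x⟫)) • l) x := by
  have h1 : HasFDerivAt (fun y : E2 => ⟪l, y⟫) (innerSL ℝ l) x := by
    simpa using (innerSL ℝ l).hasFDerivAt
  have h2 := (Real.hasDerivAt_cos ⟪l, x⟫).comp_hasFDerivAt x h1
  have h3 := h2.const_mul (2:ℝ)
  rw [hasGradientAt_iff_hasFDerivAt]
  convert h3 using 1
  ext y
  simp [InnerProductSpace.toDual_apply_apply, real_inner_smul_left, smul_smul]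
  case e'_11 => rfl
  case e'_12 =>
    ext y
    simp [InnerProductSpace.toDual_apply_apply, real_inner_smul_left, smul_smul]

lemma grad_psil_eq (l x : E2) :
    gradient (psil l) x = (-(2 * Real.sin ⟪l, x⟫)) • l :=
  (grad_psil l x).gradient

lemma cont_grad {φ : E2 → ℝ} (hφ : ContDiff ℝ 2 φ) : Continuous (gradient φ) := by
  have : Continuous (fderiv ℝ φ) := hφ.continuous_fderiv (by norm_num)
  exact (InnerProductSpace.toDual ℝ E2).symm.continuous.comp this

section main
variable {T φ : E2 → ℝ} (hT : ContDiff ℝ 1 T) (hTc : HasCompactSupport T)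
  (hφ : ContDiff ℝ 2 φ)

lemma cont_exp_inner (m : E2) :
    Continuous (fun x : E2 => Complex.exp (-(Complex.I * (⟪x, m⟫ : ℂ)))) := by
  apply Complex.continuous_exp.comp
  apply Continuous.neg
  exact continuous_const.mul (Complex.continuous_ofReal.comp (continuous_id.inner continuous_const))

lemma norm_exp_inner (m x : E2) :
    ‖Complex.exp (-(Complex.I * (⟪x, m⟫ : ℂ)))‖ = 1 := by
  rw [Complex.norm_exp]
  simp

include hT in
lemma cont_pderiv (q : Fin 2) : Continuous (pderiv2 q T) := by
  have : Continuous (fderiv ℝ T) := hT.continuous_fderiv one_ne_zero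
  exact this.clm_apply continuous_const

include hT hφ in
lemma cont_Aq (q : Fin 2) : Continuous (Aq T φ q) :=
  (cont_pderiv hT q).comp (continuous_id.sub (cont_grad hφ))

include hTc in
lemma Aq_support {Mφ : ℝ} (hbφ : ∀ x, ‖gradient φ x‖ ≤ Mφ) {R : ℝ}
    (hR : tsupport T ⊆ Metric.closedBall 0 R) (q : Fin 2) {x : E2}
    (hx : x ∉ Metric.closedBall (0:E2) (R + Mφ)) : Aq T φ q x = 0 := by
  have hy : x - gradient φ x ∉ tsupport T := by
    intro h
    apply hx
    have := hR h
    simp only [Metric.mem_closedBall, dist_zero_right] at this ⊢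
    calc ‖x‖ = ‖(x - gradient φ x) + gradient φ x‖ := congrArg norm (by abel)
      _ ≤ ‖x - gradient φ x‖ + ‖gradient φ x‖ := norm_add_le _ _
      _ ≤ R + Mφ := add_le_add this (hbφ x)
  have : fderiv ℝ T (x - gradient φ x) = 0 := by
    by_contra h
    exact hy (support_fderiv_subset ℝ h)
  simp [Aq, pderiv2, this]

include hT hTc hφ in
lemma int_exp_Aq {Mφ : ℝ} (hbφ : ∀ x, ‖gradient φ x‖ ≤ Mφ) {R : ℝ}
    (hR : tsupport T ⊆ Metric.closedBall 0 R) (q : Fin 2) (m : E2) :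
    Integrable (fun x : E2 =>
      Complex.exp (-(Complex.I * (⟪x, m⟫ : ℂ))) * ((Aq T φ q x : ℝ) : ℂ)) := by
  apply Continuous.integrable_of_hasCompactSupport
  · exact (cont_exp_inner m).mul (Complex.continuous_ofReal.comp (cont_Aq hT hφ q))
  · apply HasCompactSupport.intro (isCompact_closedBall (0:E2) (R + Mφ))
    intro x hx
    rw [Aq_support hTc hbφ hR q hx]
    simp

include hT in
lemma hasDeriv_pt (G : E2 → E2) (x : E2) (ε : ℝ) :
    HasDerivAt (fun ε : ℝ => ((T (x - gradient φ x - ε • G x) : ℝ) : ℂ))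
      ((fderiv ℝ T (x - gradient φ x - ε • G x) (-(G x)) : ℝ) : ℂ) ε := by
  have hy : HasDerivAt (fun ε : ℝ => x - gradient φ x - ε • G x) (-(G x)) ε := by
    simpa using ((hasDerivAt_id ε).smul_const (G x)).const_sub (x - gradient φ x)
  have hTd := ((hT.differentiable one_ne_zero) _).hasFDerivAt.comp_hasDerivAt ε hy
  exact Complex.ofRealCLM.hasFDerivAt.comp_hasDerivAt ε hTd

lemma fderiv_apply_decomp (y m : E2) :
    fderiv ℝ T y m = ∑ q : Fin 2, m q * pderiv2 q T y := by
  have hm : m = ∑ q : Fin 2, m q • EuclideanSpace.single q (1:ℝ) := by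
    ext i
    simp [EuclideanSpace.single_apply, Finset.sum_ite_eq']
    fin_cases i <;> simp
  conv_lhs => rw [hm]
  rw [map_sum]
  simp [pderiv2]

lemma key_id (b : ℝ) :
    ((2 * Real.sin b : ℝ) : ℂ) =
      (Complex.exp (-(Complex.I * b)) - Complex.exp (Complex.I * b)) * Complex.I := by
  push_cast
  rw [show Complex.sin (b:ℂ) = (Complex.exp (-(b:ℂ) * Complex.I) - Complex.exp ((b:ℂ) * Complex.I)) * Complex.I / 2 from rfl]
  ring_nf

end main
end helpers

/-- Derivative of the Fourier coefficient of the anti-lensed field along the cosine mode at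
frequency `l`: it equals `∑_q i l_q (Â^q(k+l) - Â^q(k-l))`. -/
theorem stmt5 (T : E2 → ℝ) (hT : ContDiff ℝ 1 T) (hTc : HasCompactSupport T)
    (φ : E2 → ℝ) (hφ : ContDiff ℝ 2 φ)
    (Mφ : ℝ) (hbφ : ∀ x, ‖gradient φ x‖ ≤ Mφ)
    (k l : E2) :
    HasDerivAt
      (fun ε : ℝ => (2 * Real.pi)⁻¹ • ∫ x : E2,
        Complex.exp (-(Complex.I * (⟪x, k⟫ : ℂ))) *
          ((T (x - gradient φ x - ε • gradient (psil l) x) : ℝ) : ℂ))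
      (∑ q : Fin 2, Complex.I * ((l q : ℝ) : ℂ) *
        (ftR (Aq T φ q) (k + l) - ftR (Aq T φ q) (k - l)))
      0 := by
  obtain ⟨C, hC⟩ : ∃ C, ∀ y, ‖fderiv ℝ T y‖ ≤ C :=
    (hT.continuous_fderiv one_ne_zero).bounded_above_of_compact_support (hTc.fderiv (𝕜 := ℝ))
  obtain ⟨R, hR⟩ : ∃ R, tsupport T ⊆ Metric.closedBall 0 R :=
    hTc.isBounded.subset_closedBall 0
  set G : E2 → E2 := gradient (psil l) with hGdef
  have hGeq : ∀ x, G x = (-(2 * Real.sin ⟪l, x⟫)) • l := fun x => grad_psil_eq l x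
  have hGcont : Continuous G := by
    have hc : Continuous fun x : E2 => (-(2 * Real.sin ⟪l, x⟫)) • l := by
      apply Continuous.fun_smul _ continuous_const
      exact (continuous_const.mul (Real.continuous_sin.comp
        (continuous_const.inner continuous_id))).neg
    exact hc.congr fun x => (hGeq x).symm
  have hGnorm : ∀ x, ‖G x‖ ≤ 2 * ‖l‖ := by
    intro x
    rw [hGeq x, norm_smul, Real.norm_eq_abs, abs_neg, abs_mul, abs_two]
    apply mul_le_mul_of_nonneg_right _ (norm_nonneg l)
    nlinarith [Real.neg_one_le_sin ⟪l, x⟫, Real.sin_le_one ⟪l, x⟫,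
      abs_le.mpr ⟨Real.neg_one_le_sin ⟪l, x⟫, Real.sin_le_one ⟪l, x⟫⟩]
  set R' : ℝ := R + (Mφ + 2 * ‖l‖) with hR'
  have hout : ∀ (x v : E2), ‖v‖ ≤ Mφ + 2 * ‖l‖ →
      x ∉ Metric.closedBall (0:E2) R' → x - v ∉ tsupport T := by
    intro x v hv hx h
    apply hx
    have h1 := hR h
    simp only [Metric.mem_closedBall, dist_zero_right] at h1 ⊢
    calc ‖x‖ = ‖(x - v) + v‖ := congrArg norm (by abel)
      _ ≤ ‖x - v‖ + ‖v‖ := norm_add_le _ _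
      _ ≤ R + (Mφ + 2 * ‖l‖) := add_le_add h1 hv
  have hsub : ∀ (x : E2) (ε : ℝ),
      x - gradient φ x - ε • G x = x - (gradient φ x + ε • G x) := fun x ε => by abel
  have hvbound : ∀ (ε : ℝ), |ε| ≤ 1 → ∀ x : E2,
      ‖gradient φ x + ε • G x‖ ≤ Mφ + 2 * ‖l‖ := by
    intro ε hε x
    refine (norm_add_le _ _).trans (add_le_add (hbφ x) ?_)
    rw [norm_smul, Real.norm_eq_abs]
    calc |ε| * ‖G x‖ ≤ 1 * (2 * ‖l‖) :=
          mul_le_mul hε (hGnorm x) (norm_nonneg _) one_pos.le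
      _ = 2 * ‖l‖ := one_mul _
  set F : ℝ → E2 → ℂ := fun ε x =>
    Complex.exp (-(Complex.I * (⟪x, k⟫ : ℂ))) *
      ((T (x - gradient φ x - ε • G x) : ℝ) : ℂ) with hF
  set F' : ℝ → E2 → ℂ := fun ε x =>
    Complex.exp (-(Complex.I * (⟪x, k⟫ : ℂ))) *
      ((fderiv ℝ T (x - gradient φ x - ε • G x) (-(G x)) : ℝ) : ℂ) with hF'
  have hcont_y : ∀ ε : ℝ, Continuous fun x : E2 => x - gradient φ x - ε • G x :=
    fun ε => (continuous_id.sub (cont_grad hφ)).sub (hGcont.const_smul ε)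
  have hFmeas : ∀ ε : ℝ, AEStronglyMeasurable (F ε) volume := fun ε =>
    ((cont_exp_inner k).mul (Complex.continuous_ofReal.comp
      (hT.continuous.comp (hcont_y ε)))).aestronglyMeasurable
  have hFint : Integrable (F 0) := by
    apply Continuous.integrable_of_hasCompactSupport
    · exact (cont_exp_inner k).mul (Complex.continuous_ofReal.comp
        (hT.continuous.comp (hcont_y 0)))
    · apply HasCompactSupport.intro (isCompact_closedBall (0:E2) R')
      intro x hx
      have h0 : T (x - gradient φ x - (0:ℝ) • G x) = 0 := by
        rw [hsub]
        exact image_eq_zero_of_notMem_tsupport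
          (hout x _ (hvbound 0 (by norm_num) x) hx)
      simp only [hF, h0, Complex.ofReal_zero, mul_zero]
  have hF'cont : ∀ ε : ℝ, Continuous (F' ε) := by
    intro ε
    apply (cont_exp_inner k).mul
    apply Complex.continuous_ofReal.comp
    exact ((hT.continuous_fderiv one_ne_zero).comp (hcont_y ε)).clm_apply hGcont.neg
  set bound : E2 → ℝ :=
    (Metric.closedBall (0:E2) R').indicator (fun _ => C * (2 * ‖l‖)) with hbound_def
  have h_bound : ∀ᵐ x : E2, ∀ ε ∈ Metric.ball (0:ℝ) 1, ‖F' ε x‖ ≤ bound x := by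
    refine Filter.Eventually.of_forall fun x ε hε => ?_
    have hεle : |ε| ≤ 1 := le_of_lt (by simpa [Real.dist_eq] using hε)
    by_cases hx : x ∈ Metric.closedBall (0:E2) R'
    · rw [hbound_def, Set.indicator_of_mem hx]
      rw [hF']
      simp only [norm_mul, norm_exp_inner, one_mul, Complex.norm_real]
      calc ‖fderiv ℝ T (x - gradient φ x - ε • G x) (-(G x))‖
          ≤ ‖fderiv ℝ T (x - gradient φ x - ε • G x)‖ * ‖-(G x)‖ :=
            ContinuousLinearMap.le_opNorm _ _
        _ ≤ C * (2 * ‖l‖) := by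
            apply mul_le_mul (hC (x - gradient φ x - ε • G x)) _ (norm_nonneg _)
              ((norm_nonneg _).trans (hC 0))
            simpa using hGnorm x
    · rw [hbound_def, Set.indicator_of_notMem hx]
      have hz : fderiv ℝ T (x - gradient φ x - ε • G x) = 0 := by
        by_contra h
        exact (hout x _ (hvbound ε hεle x) hx)
          ((hsub x ε) ▸ support_fderiv_subset ℝ h)
      simp [hF', hz]
  have hbound_int : Integrable bound := by
    rw [hbound_def, integrable_indicator_iff measurableSet_closedBall]
    exact integrableOn_const measure_closedBall_lt_top.ne
  have h_diff : ∀ᵐ x : E2, ∀ ε ∈ Metric.ball (0:ℝ) 1,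
      HasDerivAt (F · x) (F' ε x) ε :=
    Filter.Eventually.of_forall fun x ε _ =>
      (hasDeriv_pt hT G x ε).const_mul _
  obtain ⟨-, hKey⟩ := hasDerivAt_integral_of_dominated_loc_of_deriv_le (Metric.ball_mem_nhds 0 one_pos)
    (Filter.Eventually.of_forall hFmeas) hFint
    ((hF'cont 0).aestronglyMeasurable) h_bound hbound_int h_diff
  -- Pointwise identification of the derivative integrand
  have hptwise : ∀ x : E2, F' 0 x = ∑ q : Fin 2,
      Complex.I * ((l q : ℝ) : ℂ) *
        (Complex.exp (-(Complex.I * (⟪x, k + l⟫ : ℂ))) * ((Aq T φ q x : ℝ) : ℂ) -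
         Complex.exp (-(Complex.I * (⟪x, k - l⟫ : ℂ))) * ((Aq T φ q x : ℝ) : ℂ)) := by
    intro x
    have hng : -(G x) = (2 * Real.sin ⟪l, x⟫) • l := by
      rw [hGeq x, neg_smul, neg_neg]
    have e1 : (⟪x, k + l⟫ : ℝ) = ⟪x, k⟫ + ⟪l, x⟫ := by
      rw [inner_add_right, real_inner_comm x l]
    have e2 : (⟪x, k - l⟫ : ℝ) = ⟪x, k⟫ - ⟪l, x⟫ := by
      rw [inner_sub_right, real_inner_comm x l]
    have e3 : Complex.exp (-(Complex.I * ((⟪x, k⟫ + ⟪l, x⟫ : ℝ) : ℂ))) =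
        Complex.exp (-(Complex.I * (⟪x, k⟫ : ℝ))) *
          Complex.exp (-(Complex.I * (⟪l, x⟫ : ℝ))) := by
      rw [← Complex.exp_add]
      congr 1
      push_cast
      ring
    have e4 : Complex.exp (-(Complex.I * ((⟪x, k⟫ - ⟪l, x⟫ : ℝ) : ℂ))) =
        Complex.exp (-(Complex.I * (⟪x, k⟫ : ℝ))) *
          Complex.exp (Complex.I * (⟪l, x⟫ : ℝ)) := by
      rw [← Complex.exp_add]
      congr 1
      push_cast
      ring
    rw [hF']
    simp only [zero_smul, sub_zero]
    rw [hng, ContinuousLinearMap.map_smul, fderiv_apply_decomp]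
    rw [e1, e2, e3, e4]
    have hA : ∀ q : Fin 2, pderiv2 q T (x - gradient φ x) = Aq T φ q x := fun q => rfl
    simp only [hA, smul_eq_mul]
    rw [show ((2 * Real.sin ⟪l, x⟫ * ∑ q : Fin 2, l q * Aq T φ q x : ℝ) : ℂ) =
        ((2 * Real.sin ⟪l, x⟫ : ℝ) : ℂ) *
          ∑ q : Fin 2, ((l q : ℝ) : ℂ) * ((Aq T φ q x : ℝ) : ℂ) by push_cast; ring]
    rw [key_id]
    simp only [Finset.mul_sum]
    refine Finset.sum_congr rfl fun q _ => ?_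
    ring
  have hintsum : (∫ x : E2, F' 0 x) = ∑ q : Fin 2, Complex.I * ((l q : ℝ) : ℂ) *
      ((∫ x : E2, Complex.exp (-(Complex.I * (⟪x, k + l⟫ : ℂ))) * ((Aq T φ q x : ℝ) : ℂ)) -
       (∫ x : E2, Complex.exp (-(Complex.I * (⟪x, k - l⟫ : ℂ))) * ((Aq T φ q x : ℝ) : ℂ))) := by
    rw [integral_congr_ae (Filter.Eventually.of_forall hptwise)]
    rw [integral_finset_sum]
    · refine Finset.sum_congr rfl fun q _ => ?_
      rw [integral_const_mul, integral_sub (int_exp_Aq hT hTc hφ hbφ hR q (k + l))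
        (int_exp_Aq hT hTc hφ hbφ hR q (k - l))]
    · intro q _
      exact (((int_exp_Aq hT hTc hφ hbφ hR q (k + l)).sub
        (int_exp_Aq hT hTc hφ hbφ hR q (k - l))).const_mul _)
  have hfinal : (2 * Real.pi)⁻¹ • (∫ x : E2, F' 0 x) =
      ∑ q : Fin 2, Complex.I * ((l q : ℝ) : ℂ) *
        (ftR (Aq T φ q) (k + l) - ftR (Aq T φ q) (k - l)) := by
    rw [hintsum, Finset.smul_sum]
    refine Finset.sum_congr rfl fun q _ => ?_
    simp only [ftR, ft, Complex.real_smul]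
    push_cast
    ring
  have hres := hKey.const_smul ((2 * Real.pi)⁻¹ : ℝ)
  rw [hfinal] at hres
  simpa only [hF, Pi.smul_def] using hres
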